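/- Fix n ≥ 2 and ε ∈ [0, 1−1/n]. Then D_{n,ε} ⊒ D_{n,μ} if and only if μ ∈ [ε, 1 − ε/(n−1)]. -/

import Mathlib

open Matrix BigOperators

def RowStochastic {a b : ℕ} (M : Matrix (Fin a) (Fin b) ℝ) : Prop :=
  (∀ i j, 0 ≤ M i j) ∧ ∀ i, ∑ j, M i j = 1

def UW {a b c d : ℕ} (C : Matrix (Fin a) (Fin b) ℝ) (D : Matrix (Fin c) (Fin d) ℝ) : Prop :=
  ∃ (L : Matrix (Fin a) (Fin c) ℝ) (R : Matrix (Fin d) (Fin b) ℝ),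
    RowStochastic L ∧ RowStochastic R ∧ C = L * D * R
noncomputable def Dmat (n : ℕ) (ε : ℝ) : Matrix (Fin n) (Fin n) ℝ :=
  Matrix.of fun i j => if i = j then 1 - ε else ε / (n - 1)
lemma rs_one (n : ℕ) : RowStochastic (1 : Matrix (Fin n) (Fin n) ℝ) := by
  constructor
  · intro i j
    by_cases h : i = j <;> simp [Matrix.one_apply, h]
  · intro i; simp [Matrix.one_apply]

lemma Dmat_row_sum (n : ℕ) (hn : 2 ≤ n) (δ : ℝ) (i : Fin n) :
    ∑ j, Dmat n δ i j = 1 := by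
  have hn1 : (1:ℝ) ≤ (n:ℝ) - 1 := by
    have : (2:ℝ) ≤ (n:ℝ) := by exact_mod_cast hn
    linarith
  have hne : ((n:ℝ) - 1) ≠ 0 := by linarith
  rw [← Finset.add_sum_erase _ _ (Finset.mem_univ i)]
  have h2 : ∑ j ∈ Finset.univ.erase i, Dmat n δ i j
      = ∑ j ∈ Finset.univ.erase i, δ / ((n:ℝ) - 1) := by
    apply Finset.sum_congr rfl
    intro j hj
    have : i ≠ j := (Finset.ne_of_mem_erase hj).symm
    simp [Dmat, this]
  rw [h2, Finset.sum_const]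
  have hcard : (Finset.univ.erase i).card = n - 1 := by
    simp [Finset.card_erase_of_mem]
  rw [hcard]
  have hcast : ((n - 1 : ℕ) : ℝ) = (n:ℝ) - 1 := by
    have : 1 ≤ n := by omega
    push_cast [this]; ring
  simp [Dmat, nsmul_eq_mul, hcast]
  field_simp
  ring

lemma rs_Dmat (n : ℕ) (hn : 2 ≤ n) (δ : ℝ) (h0 : 0 ≤ δ) (h1 : δ ≤ 1) :
    RowStochastic (Dmat n δ) := by
  have hn1 : (1:ℝ) ≤ (n:ℝ) - 1 := by
    have : (2:ℝ) ≤ (n:ℝ) := by exact_mod_cast hn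
    linarith
  exact ⟨fun i j => by
    by_cases h : i = j <;> simp [Dmat, h]
    · linarith
    · positivity, Dmat_row_sum n hn δ⟩

lemma Dmat_mul (n : ℕ) (hn : 2 ≤ n) (a b : ℝ) :
    Dmat n a * Dmat n b = Dmat n (a + b - a * b * n / ((n:ℝ) - 1)) := by
  have hn1 : (1:ℝ) ≤ (n:ℝ) - 1 := by
    have : (2:ℝ) ≤ (n:ℝ) := by exact_mod_cast hn
    linarith
  have hne : ((n:ℝ) - 1) ≠ 0 := by linarith
  ext i j
  rw [Matrix.mul_apply]
  by_cases hij : i = j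
  · subst hij
    rw [← Finset.add_sum_erase _ _ (Finset.mem_univ i)]
    have h2 : ∑ k ∈ Finset.univ.erase i, Dmat n a i k * Dmat n b k i
        = ∑ k ∈ Finset.univ.erase i, (a / ((n:ℝ)-1)) * (b / ((n:ℝ)-1)) := by
      apply Finset.sum_congr rfl
      intro k hk
      have h1 : i ≠ k := (Finset.ne_of_mem_erase hk).symm
      simp [Dmat, h1, h1.symm]
    rw [h2, Finset.sum_const]
    have hcard : (Finset.univ.erase i).card = n - 1 := by
      simp [Finset.card_erase_of_mem]
    rw [hcard]
    have hcast : ((n - 1 : ℕ) : ℝ) = (n:ℝ) - 1 := by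
      have : 1 ≤ n := by omega
      push_cast [this]; ring
    simp only [Dmat, Matrix.of_apply, if_pos rfl, nsmul_eq_mul, hcast, eq_self_iff_true, if_true]
    field_simp
    ring
  · rw [← Finset.add_sum_erase _ _ (Finset.mem_univ i)]
    have hji : j ∈ Finset.univ.erase i := by
      simp [Ne.symm hij]
    rw [← Finset.add_sum_erase _ _ hji]
    have h2 : ∑ k ∈ (Finset.univ.erase i).erase j, Dmat n a i k * Dmat n b k j
        = ∑ k ∈ (Finset.univ.erase i).erase j, (a / ((n:ℝ)-1)) * (b / ((n:ℝ)-1)) := by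
      apply Finset.sum_congr rfl
      intro k hk
      have h1 : k ≠ j := Finset.ne_of_mem_erase hk
      have h3 : k ≠ i := Finset.ne_of_mem_erase (Finset.mem_of_mem_erase hk)
      simp [Dmat, h1, h3.symm]
    rw [h2, Finset.sum_const]
    have hcard : ((Finset.univ.erase i).erase j).card = n - 2 := by
      rw [Finset.card_erase_of_mem hji, Finset.card_erase_of_mem (Finset.mem_univ i)]
      simp only [Finset.card_univ, Fintype.card_fin]
      omega
    rw [hcard]
    have hcast : ((n - 2 : ℕ) : ℝ) = (n:ℝ) - 2 := by
      push_cast [hn]; ring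
    simp only [Dmat, Matrix.of_apply, if_pos rfl, if_neg hij, if_neg (Ne.symm hij),
      nsmul_eq_mul, hcast, eq_self_iff_true, if_true]
    field_simp
    ring

lemma key_lower (n : ℕ) (L D R : Matrix (Fin n) (Fin n) ℝ)
    (hL : RowStochastic L) (hR : RowStochastic R) (c : ℝ)
    (hD : ∀ k l, c ≤ D k l) (f : Fin n → Fin n) :
    c * n ≤ ∑ j, (L * D * R) (f j) j := by
  have hstep : ∀ j : Fin n, ∑ l, c * R l j ≤ (L * D * R) (f j) j := by
    intro j
    rw [Matrix.mul_apply]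
    apply Finset.sum_le_sum
    intro l _
    have hinner : c ≤ (L * D) (f j) l := by
      rw [Matrix.mul_apply]
      calc c = ∑ k, L (f j) k * c := by
              rw [← Finset.sum_mul, hL.2, one_mul]
        _ ≤ ∑ k, L (f j) k * D k l :=
              Finset.sum_le_sum fun k _ =>
                mul_le_mul_of_nonneg_left (hD k l) (hL.1 _ k)
    exact mul_le_mul_of_nonneg_right hinner (hR.1 l j)
  calc c * n = ∑ j : Fin n, ∑ l, c * R l j := by
        rw [Finset.sum_comm]
        simp only [← Finset.mul_sum]
        simp [hR.2, Finset.sum_const, mul_comm]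
    _ ≤ ∑ j, (L * D * R) (f j) j := Finset.sum_le_sum fun j _ => hstep j

/-- For ε in the distinguishability regime, D_{n,ε} ⊒ D_{n,μ} iff
μ ∈ [ε, 1 − ε/(n−1)]. -/
theorem Dmat_uw_iff_dist (n : ℕ) (hn : 2 ≤ n) (ε μ : ℝ)
    (hε : ε ∈ Set.Icc (0:ℝ) (1 - 1/n)) (hμ : μ ∈ Set.Icc (0:ℝ) 1) :
    UW (Dmat n μ) (Dmat n ε) ↔ μ ∈ Set.Icc ε (1 - ε / (n - 1)) := by
  have hn2 : (2:ℝ) ≤ (n:ℝ) := by exact_mod_cast hn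
  have hn1 : (1:ℝ) ≤ (n:ℝ) - 1 := by linarith
  have hne : ((n:ℝ) - 1) ≠ 0 := by linarith
  have hpos : (0:ℝ) < (n:ℝ) - 1 := by linarith
  have hnpos : (0:ℝ) < (n:ℝ) := by linarith
  obtain ⟨hε0, hε1⟩ := hε
  obtain ⟨hμ0, hμ1⟩ := hμ
  have hεn : ε * (n:ℝ) ≤ (n:ℝ) - 1 := by
    have h := mul_le_mul_of_nonneg_right hε1 (le_of_lt hnpos)
    have h1n : (1 - 1/(n:ℝ)) * n = (n:ℝ) - 1 := by field_simp
    linarith [h1n ▸ h]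
  constructor
  · rintro ⟨L, R, hL, hR, hC⟩
    have hD : ∀ k l, ε / ((n:ℝ) - 1) ≤ Dmat n ε k l := by
      intro k l
      by_cases h : k = l <;> simp [Dmat, h]
      rw [div_le_iff₀ hpos]
      nlinarith
    haveI : NeZero n := ⟨by omega⟩
    -- bound with f = id
    have hb1 := key_lower n L (Dmat n ε) R hL hR _ hD id
    rw [← hC] at hb1
    have hsum1 : ∑ j : Fin n, Dmat n μ (id j) j = (n:ℝ) * (1 - μ) := by
      simp [Dmat, Finset.sum_const, mul_comm]
      ring
    rw [hsum1] at hb1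
    -- bound with f = (· + 1)
    have hadd : ∀ j : Fin n, j + 1 ≠ j := by
      intro j h
      have h1 : (1 : Fin n) = 0 := by
        have := congrArg (fun x => x - j) h
        simpa [add_comm, add_sub_cancel_right] using this
      have := Fin.one_eq_zero_iff.mp h1
      omega
    have hb2 := key_lower n L (Dmat n ε) R hL hR _ hD (fun j => j + 1)
    rw [← hC] at hb2
    have hsum2 : ∑ j : Fin n, Dmat n μ (j + 1) j = (n:ℝ) * (μ / ((n:ℝ) - 1)) := by
      have heach : ∀ j : Fin n, Dmat n μ (j + 1) j = μ / ((n:ℝ) - 1) := by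
        intro j; simp [Dmat, hadd j]
      simp [heach, Finset.sum_const, mul_comm]
    rw [hsum2] at hb2
    constructor
    · have h' : ε / ((n:ℝ)-1) * n ≤ μ / ((n:ℝ)-1) * n := by linarith
      have := le_of_mul_le_mul_right h' hnpos
      exact (div_le_div_iff_of_pos_right hpos).mp this
    · have h' : ε / ((n:ℝ)-1) * n ≤ (1 - μ) * n := by linarith
      have := le_of_mul_le_mul_right h' hnpos
      linarith
  · rintro ⟨h1, h2⟩
    have hαe0 : 0 ≤ 1 - ε * n / ((n:ℝ) - 1) := by
      rw [sub_nonneg, div_le_one hpos]; linarith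
    by_cases hα0 : 1 - ε * n / ((n:ℝ) - 1) = 0
    · -- edge case: ε = 1 - 1/n and μ = ε
      have hεval : ε * (n:ℝ) = (n:ℝ) - 1 := by
        field_simp at hα0
        linarith
      have hfrac : ε / ((n:ℝ) - 1) + ε = 1 := by
        rw [div_add' _ _ _ hne]
        rw [div_eq_one_iff_eq hne]
        nlinarith
      have hμε : μ = ε := le_antisymm (by linarith) h1
      exact ⟨1, 1, rs_one n, rs_one n, by rw [Matrix.one_mul, Matrix.mul_one, hμε]⟩
    · have hαpos : 0 < 1 - ε * n / ((n:ℝ) - 1) := lt_of_le_of_ne hαe0 (Ne.symm hα0)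
      set δ := (μ - ε) / (1 - ε * n / ((n:ℝ) - 1)) with hδ
      have hδ0 : 0 ≤ δ := div_nonneg (by linarith) (le_of_lt hαpos)
      have hδ1 : δ ≤ 1 := by
        rw [hδ, div_le_one hαpos]
        have hkey : ε * n / ((n:ℝ)-1) - ε = ε / ((n:ℝ)-1) := by
          field_simp; ring
        linarith
      refine ⟨Dmat n δ, 1, rs_Dmat n hn δ hδ0 hδ1, rs_one n, ?_⟩
      rw [Matrix.mul_one, Dmat_mul n hn]
      have hcancel : δ * (1 - ε * n / ((n:ℝ) - 1)) = μ - ε :=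
        div_mul_cancel₀ _ hα0
      have : δ + ε - δ * ε * n / ((n:ℝ) - 1) = μ := by
        have : δ + ε - δ * ε * n / ((n:ℝ) - 1)
            = δ * (1 - ε * n / ((n:ℝ) - 1)) + ε := by ring
        rw [this, hcancel]; ring
      rw [this]
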